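/- There exists a constant A' > 0 such that for every positive integer n and every ρ ∈ (0,1) there exist measurable sets A, B ⊂ ℝⁿ with 0 < λ(A) < ∞, 0 < λ(B) < ∞ and ρ ≤ (λ(B)/λ(A))^{1/n} ≤ ρ⁻¹, and a measurable set Θ ⊂ A × B with λ(Θ) > (1 − A'·ρ·n^{1/2})·λ(A)·λ(B), for which λ(A +_Θ B)^{2/n} < λ(A)^{2/n} + λ(B)^{2/n}. -/

import Mathlib

set_option maxHeartbeats 1000000

open MeasureTheory Metric
open scoped RealInnerProductSpace

private lemma geom_aux : ∀ N : ℕ, (∑ j ∈ Finset.range N, (2*(j:ℝ)+1) * (2/3:ℝ)^(j-1))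
    + (6*(N:ℝ)+15)*(2/3:ℝ)^(N-1) ≤ 22 := by
  intro N
  induction N with
  | zero => norm_num
  | succ M ih =>
    rw [Finset.sum_range_succ]
    rcases Nat.eq_zero_or_pos M with hM | hM
    · subst hM; norm_num
    · obtain ⟨K, rfl⟩ : ∃ K, M = K + 1 := ⟨M - 1, (Nat.succ_pred_eq_of_pos hM).symm⟩
      have hP : (0:ℝ) < (2/3:ℝ)^K := by positivity
      have h1 : (K + 1 + 1 : ℕ) - 1 = K + 1 := rfl
      have h2 : (K + 1 : ℕ) - 1 = K := rfl
      rw [h1, h2] at *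
      rw [pow_succ] at *
      push_cast at *
      nlinarith [ih, hP]

private lemma shell_bound (n : ℕ) (hn : 0 < n) (a : ℝ) (ha : 0 ≤ a) :
    volume {x : EuclideanSpace ℝ (Fin n) | ‖x‖ ≤ 1 ∧ 1 - a < ‖x‖^2}
      ≤ ENNReal.ofReal (n*a) * volume (ball (0:EuclideanSpace ℝ (Fin n)) 1) := by
  set E := EuclideanSpace ℝ (Fin n)
  set ω := volume (ball (0:E) 1) with hω
  have hωt : ω ≠ ⊤ := measure_ball_lt_top.ne
  have hcb : ∀ r : ℝ, 0 ≤ r → volume (closedBall (0:E) r) = ENNReal.ofReal (r ^ n) * ω := by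
    intro r hr
    rw [Measure.addHaar_closedBall volume _ hr, finrank_euclideanSpace_fin]
  have hA : volume (closedBall (0:E) 1) = ω := by rw [hcb 1 zero_le_one]; simp
  by_cases h1 : 1 ≤ a
  · have hna : (1:ℝ) ≤ n * a := by
      have : (1:ℝ) ≤ n := by exact_mod_cast hn
      nlinarith
    calc volume {x : E | ‖x‖ ≤ 1 ∧ 1 - a < ‖x‖^2}
        ≤ volume (closedBall (0:E) 1) := by
          apply measure_mono
          intro x hx
          exact mem_closedBall_zero_iff.mpr hx.1
      _ = 1 * ω := by rw [hA, one_mul]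
      _ ≤ ENNReal.ofReal (n*a) * ω := by
          gcongr
          exact ENNReal.one_le_ofReal.mpr hna
  · push_neg at h1
    set z := Real.sqrt (1-a) with hzdef
    have hz0 : 0 ≤ z := Real.sqrt_nonneg _
    have hzsq : z^2 = 1 - a := Real.sq_sqrt (by linarith)
    have hz1 : z ≤ 1 := by nlinarith
    have hsub : {x : E | ‖x‖ ≤ 1 ∧ 1 - a < ‖x‖^2}
        ⊆ closedBall (0:E) 1 \ closedBall (0:E) z := by
      intro x hx
      refine ⟨mem_closedBall_zero_iff.mpr hx.1, fun hxz => ?_⟩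
      have : ‖x‖ ≤ z := mem_closedBall_zero_iff.mp hxz
      have : ‖x‖^2 ≤ z^2 := by nlinarith [norm_nonneg x]
      nlinarith [hx.2]
    have hdiff : volume (closedBall (0:E) 1 \ closedBall (0:E) z)
        = ω - ENNReal.ofReal (z^n) * ω := by
      rw [measure_diff (closedBall_subset_closedBall hz1)
        measurableSet_closedBall.nullMeasurableSet
        measure_closedBall_lt_top.ne, hA, hcb z hz0]
    have hkey : (1:ℝ) ≤ n*a + z^n := by
      have hb : (1:ℝ) + n*(z-1) ≤ z^n := by
        have h := one_add_mul_le_pow (show (-2:ℝ) ≤ z - 1 by linarith) n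
        rw [show (1:ℝ) + (z-1) = z by ring] at h
        linarith [h]
      have hza : 1 - a ≤ z := by nlinarith
      have : (0:ℝ) ≤ n * (a + z - 1) := by
        have : (0:ℝ) ≤ a + z - 1 := by linarith
        positivity
      nlinarith
    calc volume {x : E | ‖x‖ ≤ 1 ∧ 1 - a < ‖x‖^2}
        ≤ ω - ENNReal.ofReal (z^n) * ω := hdiff ▸ measure_mono hsub
      _ ≤ ENNReal.ofReal (n*a) * ω := by
          rw [tsub_le_iff_right]
          calc ω = 1 * ω := (one_mul ω).symm
            _ ≤ ENNReal.ofReal (n*a + z^n) * ω := by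
                gcongr; exact ENNReal.one_le_ofReal.mpr hkey
            _ = ENNReal.ofReal (n*a) * ω + ENNReal.ofReal (z^n) * ω := by
                rw [ENNReal.ofReal_add (by positivity) (by positivity), add_mul]

private lemma cap_bound (n : ℕ) (hn : 0 < n) (ρ : ℝ) (hρ : 0 < ρ)
    (x : EuclideanSpace ℝ (Fin n)) (hx : ‖x‖ ≤ 1) (m : ℕ) :
    volume {y : EuclideanSpace ℝ (Fin n) | ‖y‖ ≤ ρ ∧ ρ * ((m:ℝ)/Real.sqrt n) < ⟪x, y⟫}
      ≤ ENNReal.ofReal (ρ^n * (2/3:ℝ)^m) * volume (ball (0:EuclideanSpace ℝ (Fin n)) 1) := by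
  set ω := volume (ball (0:EuclideanSpace ℝ (Fin n)) 1) with hω
  set s := Real.sqrt n with hs
  have hs0 : 0 < s := Real.sqrt_pos.mpr (by exact_mod_cast hn)
  have hssq : s^2 = n := Real.sq_sqrt (by positivity)
  set t : ℝ := (m:ℝ)/s with ht
  have ht0 : 0 ≤ t := by positivity
  have hcb : ∀ (c : EuclideanSpace ℝ (Fin n)) (r : ℝ), 0 ≤ r →
      volume (closedBall c r) = ENNReal.ofReal (r ^ n) * ω := by
    intro c r hr
    rw [Measure.addHaar_closedBall volume _ hr, finrank_euclideanSpace_fin]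
  by_cases hx0 : x = 0
  · have hemp : {y : EuclideanSpace ℝ (Fin n) | ‖y‖ ≤ ρ ∧ ρ * t < ⟪x, y⟫} = ∅ := by
      ext y
      simp only [Set.mem_setOf_eq, Set.mem_empty_iff_false, iff_false, not_and]
      intro _
      rw [hx0, inner_zero_left]
      exact not_lt.mpr (by positivity)
    rw [hemp]
    simp
  · set e : EuclideanSpace ℝ (Fin n) := ‖x‖⁻¹ • x with he
    have hxn0 : ‖x‖ ≠ 0 := norm_ne_zero_iff.mpr hx0
    have hxpos : 0 < ‖x‖ := norm_pos_iff.mpr hx0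
    have hene : ‖e‖ = 1 := norm_smul_inv_norm hx0
    set r : ℝ := ρ * Real.exp (-t^2/2) with hr
    have hr0 : 0 < r := by positivity
    have hsubset : {y : EuclideanSpace ℝ (Fin n) | ‖y‖ ≤ ρ ∧ ρ * t < ⟪x, y⟫}
        ⊆ closedBall ((ρ*t) • e) r := by
      intro y hy
      obtain ⟨hy1, hy2⟩ := hy
      have hxe : ⟪x, y⟫ = ‖x‖ * ⟪e, y⟫ := by
        rw [he, real_inner_smul_left]
        field_simp
      set w : ℝ := ⟪e, y⟫ with hw
      have hw1 : ρ * t < ‖x‖ * w := by rw [← hxe]; exact hy2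
      have hwpos : 0 < w := by
        by_contra hcon
        push_neg at hcon
        nlinarith [mul_nonpos_of_nonneg_of_nonpos hxpos.le hcon, mul_nonneg hρ.le ht0]
      have hwge : ρ * t ≤ w := by
        have h' : ‖x‖ * w ≤ w := mul_le_of_le_one_left hwpos.le hx
        linarith
      have hwle : w ≤ ρ := by
        calc w ≤ ‖e‖ * ‖y‖ := real_inner_le_norm e y
          _ ≤ ρ := by rw [hene, one_mul]; exact hy1
      rw [mem_closedBall_iff_norm]
      have hinner : ⟪y, (ρ*t) • e⟫ = (ρ*t) * w := by
        rw [real_inner_smul_right, real_inner_comm]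
      have hnorme : ‖(ρ*t) • e‖ = ρ*t := by
        rw [norm_smul, hene, mul_one, Real.norm_eq_abs, abs_of_nonneg (by positivity)]
      have hexp : ‖y - (ρ*t) • e‖ ^ 2 = ‖y‖^2 - 2*((ρ*t)*w) + (ρ*t)^2 := by
        rw [norm_sub_sq_real, hinner, hnorme]
        try ring
      have hsq : ‖y - (ρ*t) • e‖ ^ 2 ≤ ρ^2 * (1 - t^2) := by
        have hy2' : ‖y‖^2 ≤ ρ^2 := by nlinarith [norm_nonneg y]
        nlinarith [mul_nonneg hρ.le ht0]
      have hrsq : ρ^2 * (1-t^2) ≤ r^2 := by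
        have h1 : (1:ℝ) - t^2 ≤ Real.exp (-t^2) := by
          have := Real.add_one_le_exp (-t^2); linarith
        have e2 : Real.exp (-t^2/2) ^ 2 = Real.exp (-t^2) := by
          rw [← Real.exp_nat_mul]
          congr 1
          push_cast
          ring
        have h2 : r^2 = ρ^2 * Real.exp (-t^2) := by
          rw [hr, mul_pow, e2]
        rw [h2]
        exact mul_le_mul_of_nonneg_left h1 (sq_nonneg ρ)
      have hfin : ‖y - (ρ*t) • e‖ ^ 2 ≤ r^2 := le_trans hsq hrsq
      nlinarith [norm_nonneg (y - (ρ*t) • e), hr0, hfin]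
    refine le_trans (measure_mono hsubset) ?_
    rw [hcb _ r hr0.le]
    gcongr
    -- r^n ≤ ρ^n * (2/3)^m
    have hexpb : Real.exp (-t^2/2) ^ n = Real.exp (-(m^2:ℝ)/2) := by
      rw [← Real.exp_nat_mul]
      congr 1
      have htsq : t^2 = (m:ℝ)^2 / n := by
        rw [ht, div_pow, hssq]
      rw [htsq]
      have hn' : ((n:ℝ)) ≠ 0 := by positivity
      field_simp
    have h23 : Real.exp (-(1:ℝ)/2) ≤ 2/3 := by
      rw [show (-(1:ℝ)/2) = -(1/2) by ring, Real.exp_neg]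
      rw [inv_le_iff_one_le_mul₀ (by positivity)]
      nlinarith [Real.add_one_le_exp (1/2 : ℝ)]
    have hm2 : Real.exp (-(m^2:ℝ)/2) ≤ (2/3:ℝ)^m := by
      calc Real.exp (-(m^2:ℝ)/2) ≤ Real.exp (-(m:ℝ)/2) := by
            apply Real.exp_le_exp.mpr
            have hmm : (m:ℝ) ≤ (m:ℝ)^2 := by exact_mod_cast Nat.le_self_pow (by norm_num) m
            linarith
        _ = (Real.exp (-(1:ℝ)/2))^m := by
            rw [← Real.exp_nat_mul]; congr 1; ring
        _ ≤ (2/3:ℝ)^m := pow_le_pow_left₀ (Real.exp_nonneg _) h23 m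
    calc r^n = ρ^n * (Real.exp (-t^2/2))^n := by rw [hr, mul_pow]
      _ = ρ^n * Real.exp (-(m^2:ℝ)/2) := by rw [hexpb]
      _ ≤ ρ^n * (2/3:ℝ)^m := mul_le_mul_of_nonneg_left hm2 (by positivity)


/-- The restricted (to `Θ`) Minkowski sum `A +_Θ B = { x + y : (x, y) ∈ Θ }`. -/
def restrictedSum {n : ℕ} (Θ : Set (EuclideanSpace ℝ (Fin n) × EuclideanSpace ℝ (Fin n))) :
    Set (EuclideanSpace ℝ (Fin n)) :=
  (fun p => p.1 + p.2) '' Θ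

/-- Optimality (Remark 1.4, second part): for some `A' > 0`, for every `n` and
`ρ ∈ (0,1)` there are sets `A`, `B` with volume ratio controlled by `ρ` and
`Θ ⊂ A × B` with `λ(Θ) > (1 - A'·ρ·√n)·λ(A)·λ(B)` for which
`λ(A +_Θ B)^{2/n} < λ(A)^{2/n} + λ(B)^{2/n}`. -/
theorem restricted_minkowski_optimality_ratio :
    ∃ A' : ℝ, 0 < A' ∧
      ∀ (n : ℕ), 0 < n →
      ∀ (ρ : ℝ), ρ ∈ Set.Ioo (0 : ℝ) 1 →
        ∃ (A B : Set (EuclideanSpace ℝ (Fin n)))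
          (Θ : Set (EuclideanSpace ℝ (Fin n) × EuclideanSpace ℝ (Fin n))),
          MeasurableSet A ∧ MeasurableSet B ∧
          0 < volume A ∧ volume A < ⊤ ∧ 0 < volume B ∧ volume B < ⊤ ∧
          ENNReal.ofReal ρ ≤ (volume B / volume A) ^ ((1 : ℝ) / n) ∧
          (volume B / volume A) ^ ((1 : ℝ) / n) ≤ ENNReal.ofReal ρ⁻¹ ∧
          MeasurableSet Θ ∧ Θ ⊆ A ×ˢ B ∧
          ENNReal.ofReal (1 - A' * ρ * Real.sqrt n) * (volume A * volume B) < volume Θ ∧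
          volume (restrictedSum Θ) ^ ((2 : ℝ) / n)
            < volume A ^ ((2 : ℝ) / n) + volume B ^ ((2 : ℝ) / n) := by
  refine ⟨23, by norm_num, ?_⟩
  intro n hn ρ hρ
  obtain ⟨hρ0, hρ1⟩ := hρ
  -- basic constants
  set s := Real.sqrt n with hsdef
  have hn1 : (1:ℝ) ≤ n := by exact_mod_cast hn
  have hs0 : 0 < s := Real.sqrt_pos.mpr (by linarith)
  have hssq : s^2 = n := Real.sq_sqrt (by linarith)
  have hs1 : 1 ≤ s := by nlinarith
  set δ := ρ / s with hδdef
  have hδ0 : 0 < δ := by positivity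
  have hδρ : δ ≤ ρ := by
    rw [hδdef]
    exact div_le_self hρ0.le hs1
  have hδ1 : δ < 1 := lt_of_le_of_lt hδρ hρ1
  set K := 1 + ρ^2 - δ with hKdef
  have hK0 : 0 < K := by nlinarith
  -- the sets
  set A := closedBall (0:EuclideanSpace ℝ (Fin n)) 1 with hA
  set B := closedBall (0:EuclideanSpace ℝ (Fin n)) ρ with hB
  set ω := volume (ball (0:EuclideanSpace ℝ (Fin n)) 1) with hω
  have hω0 : 0 < ω := measure_ball_pos _ _ one_pos
  have hωt : ω < ⊤ := measure_ball_lt_top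
  have hcb : ∀ (c : EuclideanSpace ℝ (Fin n)) (r : ℝ), 0 ≤ r →
      volume (closedBall c r) = ENNReal.ofReal (r ^ n) * ω := by
    intro c r hr
    rw [Measure.addHaar_closedBall volume _ hr, finrank_euclideanSpace_fin]
  have volA : volume A = ω := by rw [hA, hcb _ 1 zero_le_one]; simp
  have volB : volume B = ENNReal.ofReal (ρ^n) * ω := hcb _ ρ hρ0.le
  set Θ : Set (EuclideanSpace ℝ (Fin n) × EuclideanSpace ℝ (Fin n)) :=
    (A ×ˢ B) ∩ {p | ‖p.1 + p.2‖^2 ≤ K} with hΘdef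
  have hABm : MeasurableSet (A ×ˢ B) :=
    measurableSet_closedBall.prod measurableSet_closedBall
  have hcont : Continuous (fun p : EuclideanSpace ℝ (Fin n) × EuclideanSpace ℝ (Fin n) =>
      ‖p.1 + p.2‖^2) := ((continuous_fst.add continuous_snd).norm.pow 2)
  have hΘm : MeasurableSet Θ :=
    hABm.inter (measurableSet_le hcont.measurable measurable_const)
  refine ⟨A, B, Θ, measurableSet_closedBall, measurableSet_closedBall, ?_, ?_, ?_, ?_, ?_, ?_,
    hΘm, Set.inter_subset_left, ?_, ?_⟩
  · rw [volA]; exact hω0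
  · rw [volA]; exact hωt
  · rw [volB]
    exact ENNReal.mul_pos (ENNReal.ofReal_pos.mpr (by positivity)).ne' hω0.ne'
  · rw [volB]
    exact ENNReal.mul_lt_top ENNReal.ofReal_lt_top hωt
  · rw [volB, volA, mul_div_assoc, ENNReal.div_self hω0.ne' hωt.ne, mul_one,
      ENNReal.ofReal_pow hρ0.le, ← ENNReal.rpow_natCast (ENNReal.ofReal ρ) n,
      ← ENNReal.rpow_mul, mul_one_div_cancel (by exact_mod_cast hn.ne' : (n:ℝ) ≠ 0),
      ENNReal.rpow_one]
  · rw [volB, volA, mul_div_assoc, ENNReal.div_self hω0.ne' hωt.ne, mul_one,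
      ENNReal.ofReal_pow hρ0.le, ← ENNReal.rpow_natCast (ENNReal.ofReal ρ) n,
      ← ENNReal.rpow_mul, mul_one_div_cancel (by exact_mod_cast hn.ne' : (n:ℝ) ≠ 0),
      ENNReal.rpow_one]
    apply ENNReal.ofReal_le_ofReal
    nlinarith [inv_pos.mpr hρ0, mul_inv_cancel₀ hρ0.ne']
  · -- measure of Θ
    set bad := (A ×ˢ B) \ Θ with hbaddef
    have hbadm : MeasurableSet bad := hABm.diff hΘm
    have hbad_mem : ∀ p ∈ bad, ‖p.1‖ ≤ 1 ∧ ‖p.2‖ ≤ ρ ∧ K < ‖p.1+p.2‖^2 := by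
      intro p hp
      obtain ⟨hpAB, hpn⟩ := hp
      refine ⟨mem_closedBall_zero_iff.mp hpAB.1, mem_closedBall_zero_iff.mp hpAB.2, ?_⟩
      by_contra h
      push_neg at h
      exact hpn ⟨hpAB, h⟩
    set Lf : ℕ → ℝ := fun j => 2*ρ*((j:ℝ)-1)/s with hLf
    have hLf1 : ∀ j : ℕ, Lf (j+1) = 2*ρ*j/s := by
      intro j
      simp only [hLf]
      push_cast
      ring
    have hLfnn : ∀ j : ℕ, 0 ≤ Lf (j+1) := by
      intro j
      rw [hLf1 j]
      positivity
    set Shell : ℕ → Set (EuclideanSpace ℝ (Fin n)) := fun j =>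
      {x | ‖x‖ ≤ 1 ∧ 1 - (δ + Lf (j+1)) < ‖x‖^2 ∧ Lf j ≤ 1 - δ - ‖x‖^2} with hShell
    have hnormm : Measurable (fun x : EuclideanSpace ℝ (Fin n) => ‖x‖^2) :=
      (continuous_norm.pow 2).measurable
    have hShellm : ∀ j, MeasurableSet (Shell j) := by
      intro j
      exact ((measurableSet_le continuous_norm.measurable measurable_const).inter
        ((measurableSet_lt measurable_const hnormm).inter
          (measurableSet_le measurable_const ((measurable_const.sub hnormm)))))
    set badj : ℕ → Set (EuclideanSpace ℝ (Fin n) × EuclideanSpace ℝ (Fin n)) := fun j =>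
      bad ∩ (Shell j ×ˢ (Set.univ : Set (EuclideanSpace ℝ (Fin n)))) with hbadj
    have hcover : bad ⊆ ⋃ j, badj j := by
      intro p hp
      obtain ⟨hp1, hp2, hp3⟩ := hbad_mem p hp
      set u := 1 - δ - ‖p.1‖^2 with hu
      have hstep : 0 < 2*ρ/s := by positivity
      have hulb : Lf 0 ≤ u := by
        have hsq1 : ‖p.1‖^2 ≤ 1 := by nlinarith [norm_nonneg p.1]
        have hL0 : Lf 0 = -(2*(ρ/s)) := by simp only [hLf]; push_cast; ring
        have hd : 0 ≤ ρ/s := by positivity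
        rw [hL0, hu, hδdef]
        linarith
      set j := Nat.floor ((u - Lf 0)/(2*ρ/s)) with hj
      have hfl : (j:ℝ) ≤ (u - Lf 0)/(2*ρ/s) := Nat.floor_le (by
        apply div_nonneg _ hstep.le
        linarith)
      have hfu : (u - Lf 0)/(2*ρ/s) < j + 1 := Nat.lt_floor_add_one _
      have hLfj : ∀ k : ℕ, Lf k = Lf 0 + k * (2*ρ/s) := by
        intro k
        simp only [hLf]
        push_cast
        field_simp
        ring
      have h1 : Lf j ≤ u := by
        have hj1 : (j:ℝ) * (2*ρ/s) ≤ u - Lf 0 := (le_div_iff₀ hstep).mp hfl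
        rw [hLfj j]
        linarith
      have h2 : u < Lf (j+1) := by
        have hj2 : u - Lf 0 < ((j:ℝ)+1) * (2*ρ/s) := (div_lt_iff₀ hstep).mp hfu
        rw [hLfj (j+1)]
        push_cast
        linarith
      refine Set.mem_iUnion.mpr ⟨j, hp, ⟨?_, ?_, ?_⟩, Set.mem_univ _⟩
      · exact hp1
      · rw [hu] at h2; linarith
      · rw [hu] at h1; linarith
    have hkey : ∀ j : ℕ, volume (badj j)
        ≤ ENNReal.ofReal (ρ*s*(2*(j:ℝ)+1)) * ω * (ENNReal.ofReal (ρ^n * (2/3:ℝ)^(j-1)) * ω) := by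
      intro j
      have hbadjm : MeasurableSet (badj j) :=
        hbadm.inter ((hShellm j).prod MeasurableSet.univ)
      have hfub : volume (badj j)
          = ∫⁻ x, volume (Prod.mk x ⁻¹' badj j) := by
        rw [Measure.volume_eq_prod, Measure.prod_apply hbadjm]
      set capC := ENNReal.ofReal (ρ^n * (2/3:ℝ)^(j-1)) * ω with hcapC
      have hptwise : ∀ x, volume (Prod.mk x ⁻¹' badj j)
          ≤ (Shell j).indicator (fun _ => capC) x := by
        intro x
        by_cases hxS : x ∈ Shell j
        · rw [Set.indicator_of_mem hxS]
          rcases j with _ | m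
          · -- j = 0 : crude bound by volume of B-ball
            have hsub0 : Prod.mk x ⁻¹' badj 0 ⊆ closedBall (0:EuclideanSpace ℝ (Fin n)) ρ := by
              intro y hy
              exact mem_closedBall_zero_iff.mpr (hbad_mem _ hy.1).2.1
            refine le_trans (measure_mono hsub0) ?_
            rw [hcb _ ρ hρ0.le, hcapC]
            gcongr
            simp
          · -- j = m+1 : cap bound
            have hsubm : Prod.mk x ⁻¹' badj (m+1)
                ⊆ {y : EuclideanSpace ℝ (Fin n) | ‖y‖ ≤ ρ ∧ ρ * ((m:ℝ)/s) < ⟪x, y⟫} := by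
              intro y hy
              obtain ⟨hyb, hyS, -⟩ := hy
              obtain ⟨hy1, hy2, hy3⟩ := hbad_mem _ hyb
              refine ⟨hy2, ?_⟩
              have hnrm : ‖x + y‖^2 = ‖x‖^2 + 2*⟪x,y⟫ + ‖y‖^2 := norm_add_sq_real x y
              have hL : Lf (m+1) ≤ 1 - δ - ‖x‖^2 := hxS.2.2
              rw [hLf1 m] at hL
              have hy2' : ‖y‖ ≤ ρ := hy2
              have hy2sq : ‖y‖^2 ≤ ρ^2 := by nlinarith [norm_nonneg y]
              rw [hKdef] at hy3
              have hy3' : 1 + ρ^2 - δ < ‖x + y‖^2 := hy3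
              show ρ * ((m:ℝ)/s) < ⟪x, y⟫
              have h5 : 2 * (ρ * ((m:ℝ)/s)) < 2 * ⟪x, y⟫ := by
                have e1 : 2 * (ρ * ((m:ℝ)/s)) = 2 * ρ * (m:ℝ)/s := by ring
                rw [e1]
                linarith
              linarith [h5]
            refine le_trans (measure_mono hsubm) ?_
            have := cap_bound n hn ρ hρ0 x hxS.1 m
            rw [← hsdef] at this
            exact le_trans this (by rw [hcapC]; rfl)
        · rw [Set.indicator_of_notMem hxS]
          have : Prod.mk x ⁻¹' badj j = ∅ := by
            ext y
            simp only [Set.mem_preimage, Set.mem_empty_iff_false, iff_false]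
            intro hy
            exact hxS hy.2.1
          rw [this]
          simp
      have hshellvol : volume (Shell j) ≤ ENNReal.ofReal (ρ*s*(2*(j:ℝ)+1)) * ω := by
        have hsub : Shell j ⊆ {x : EuclideanSpace ℝ (Fin n) | ‖x‖ ≤ 1 ∧ 1 - (δ + Lf (j+1)) < ‖x‖^2} :=
          fun x hx => ⟨hx.1, hx.2.1⟩
        refine le_trans (measure_mono hsub) (le_trans (shell_bound n hn _ (add_nonneg hδ0.le (hLfnn j))) ?_)
        have heq : (n:ℝ) * (δ + Lf (j+1)) = ρ*s*(2*(j:ℝ)+1) := by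
          rw [hLf1 j, hδdef, ← hssq]
          field_simp
          ring
        rw [heq]
      calc volume (badj j) = ∫⁻ x, volume (Prod.mk x ⁻¹' badj j) := hfub
        _ ≤ ∫⁻ x, (Shell j).indicator (fun _ => capC) x := lintegral_mono hptwise
        _ = capC * volume (Shell j) := lintegral_indicator_const (hShellm j) capC
        _ ≤ capC * (ENNReal.ofReal (ρ*s*(2*(j:ℝ)+1)) * ω) := mul_le_mul_right hshellvol capC
        _ = ENNReal.ofReal (ρ*s*(2*(j:ℝ)+1)) * ω * capC := mul_comm _ _
    have hbad_le : volume bad ≤ ENNReal.ofReal (22*(ρ*s)) * (volume A * volume B) := by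
      calc volume bad ≤ volume (⋃ j, badj j) := measure_mono hcover
        _ ≤ ∑' j, volume (badj j) := measure_iUnion_le _
        _ ≤ ∑' j : ℕ, ENNReal.ofReal (ρ*s*(2*(j:ℝ)+1)) * ω * (ENNReal.ofReal (ρ^n * (2/3:ℝ)^(j-1)) * ω) :=
            ENNReal.tsum_le_tsum hkey
        _ = ∑' j : ℕ, ENNReal.ofReal ((ρ*s*ρ^n) * ((2*(j:ℝ)+1) * (2/3:ℝ)^(j-1))) * (ω*ω) := by
            apply tsum_congr
            intro j
            have hre : (ρ*s*ρ^n) * ((2*(j:ℝ)+1) * (2/3:ℝ)^(j-1))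
                = (ρ*s*(2*(j:ℝ)+1)) * (ρ^n * (2/3:ℝ)^(j-1)) := by ring
            rw [hre, ENNReal.ofReal_mul (p := ρ*s*(2*(j:ℝ)+1)) (by positivity)]
            exact mul_mul_mul_comm _ _ _ _
        _ = (∑' j : ℕ, ENNReal.ofReal ((ρ*s*ρ^n) * ((2*(j:ℝ)+1) * (2/3:ℝ)^(j-1)))) * (ω*ω) :=
            ENNReal.tsum_mul_right
        _ ≤ ENNReal.ofReal (22*(ρ*s*ρ^n)) * (ω*ω) := by
            gcongr
            rw [ENNReal.tsum_eq_iSup_sum]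
            apply iSup_le
            intro F
            rw [← ENNReal.ofReal_sum_of_nonneg (fun i _ => by positivity)]
            apply ENNReal.ofReal_le_ofReal
            have hsubF : F ⊆ Finset.range (F.sup id + 1) := fun j hj =>
              Finset.mem_range.mpr (Nat.lt_succ_of_le (Finset.le_sup (f := id) hj))
            set N := F.sup id + 1 with hN
            calc ∑ j ∈ F, (ρ*s*ρ^n) * ((2*(j:ℝ)+1) * (2/3:ℝ)^(j-1))
                ≤ ∑ j ∈ Finset.range N, (ρ*s*ρ^n) * ((2*(j:ℝ)+1) * (2/3:ℝ)^(j-1)) :=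
                  Finset.sum_le_sum_of_subset_of_nonneg hsubF (fun i _ _ => by positivity)
              _ = (ρ*s*ρ^n) * ∑ j ∈ Finset.range N, (2*(j:ℝ)+1) * (2/3:ℝ)^(j-1) := by
                  rw [Finset.mul_sum]
              _ ≤ (ρ*s*ρ^n) * 22 := by
                  apply mul_le_mul_of_nonneg_left _ (by positivity)
                  have h22 := geom_aux N
                  have htail : (0:ℝ) ≤ (6*(N:ℝ)+15)*(2/3:ℝ)^(N-1) := by positivity
                  linarith
              _ = 22*(ρ*s*ρ^n) := by ring
        _ = ENNReal.ofReal (22*(ρ*s)) * (volume A * volume B) := by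
            rw [volA, volB, show (22*(ρ*s*ρ^n)) = (22*(ρ*s))*ρ^n by ring,
              ENNReal.ofReal_mul (by positivity)]
            ring
    -- conclude
    have hABvol : volume (A ×ˢ B) = volume A * volume B := by
      rw [Measure.volume_eq_prod, Measure.prod_prod]
    have hM0 : volume A * volume B ≠ 0 := by
      rw [volA, volB]
      exact mul_ne_zero hω0.ne' (ENNReal.mul_pos (ENNReal.ofReal_pos.mpr (by positivity)).ne' hω0.ne').ne'
    have hMt : volume A * volume B ≠ ⊤ := by
      rw [volA, volB]
      exact ENNReal.mul_ne_top hωt.ne (ENNReal.mul_ne_top ENNReal.ofReal_ne_top hωt.ne)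
    have hMle : volume A * volume B ≤ volume Θ + volume bad := by
      rw [← hABvol, ← Set.union_diff_cancel (Set.inter_subset_left :
        Θ ⊆ A ×ˢ B), ← hbaddef]
      exact measure_union_le _ _
    rcases le_or_gt (1 - 23 * ρ * s) 0 with hc | hc
    · rw [ENNReal.ofReal_eq_zero.mpr hc, zero_mul]
      -- positivity of Θ
      have hsubΘ : (closedBall (0:EuclideanSpace ℝ (Fin n)) ((1-ρ)/4)) ×ˢ
          (closedBall (0:EuclideanSpace ℝ (Fin n)) ρ) ⊆ Θ := by
        intro p hp
        have hp1 : ‖p.1‖ ≤ (1-ρ)/4 := mem_closedBall_zero_iff.mp hp.1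
        have hp2 : ‖p.2‖ ≤ ρ := mem_closedBall_zero_iff.mp hp.2
        refine ⟨⟨?_, hp.2⟩, ?_⟩
        · apply mem_closedBall_zero_iff.mpr
          nlinarith
        · show ‖p.1 + p.2‖^2 ≤ K
          have hna : ‖p.1 + p.2‖ ≤ (1-ρ)/4 + ρ := le_trans (norm_add_le _ _) (by linarith)
          have hsq : ‖p.1 + p.2‖^2 ≤ ((1-ρ)/4 + ρ)^2 := by
            nlinarith [norm_nonneg (p.1 + p.2)]
          rw [hKdef]
          nlinarith [hδρ, hρ0, hρ1]
      have hppos : 0 < volume ((closedBall (0:EuclideanSpace ℝ (Fin n)) ((1-ρ)/4)) ×ˢ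
          (closedBall (0:EuclideanSpace ℝ (Fin n)) ρ)) := by
        rw [Measure.volume_eq_prod, Measure.prod_prod]
        have h1 : 0 < volume (closedBall (0:EuclideanSpace ℝ (Fin n)) ((1-ρ)/4)) :=
          lt_of_lt_of_le (measure_ball_pos _ _ (by linarith)) (measure_mono ball_subset_closedBall)
        have h2 : 0 < volume (closedBall (0:EuclideanSpace ℝ (Fin n)) ρ) :=
          lt_of_lt_of_le (measure_ball_pos _ _ hρ0) (measure_mono ball_subset_closedBall)
        exact ENNReal.mul_pos h1.ne' h2.ne'
      exact lt_of_lt_of_le hppos (measure_mono hsubΘ)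
    · have h1 : ENNReal.ofReal (1 - 23 * ρ * s) * (volume A * volume B)
          + ENNReal.ofReal (22*(ρ*s)) * (volume A * volume B) < volume A * volume B := by
        rw [← add_mul, ← ENNReal.ofReal_add (by linarith) (by positivity)]
        nth_rewrite 2 [show volume A * volume B = 1 * (volume A * volume B) by rw [one_mul]]
        apply ENNReal.mul_lt_mul_left hM0 hMt
        apply ENNReal.ofReal_lt_one.mpr
        nlinarith [mul_pos hρ0 hs0]
      have h2 : volume A * volume B ≤ volume Θ + ENNReal.ofReal (22*(ρ*s)) * (volume A * volume B) :=
        le_trans hMle (add_le_add_right hbad_le _)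
      have h3 := lt_of_lt_of_le h1 h2
      exact (ENNReal.add_lt_add_iff_right
        (ENNReal.mul_ne_top ENNReal.ofReal_ne_top hMt)).mp h3
  · -- volume inequality
    have hpow : ∀ r : ℝ, 0 ≤ r → (ENNReal.ofReal (r^n) * ω) ^ ((2:ℝ)/n)
        = ENNReal.ofReal (r^2) * ω ^ ((2:ℝ)/n) := by
      intro r hr
      rw [ENNReal.mul_rpow_of_nonneg _ _ (by positivity), ENNReal.ofReal_pow hr,
        ← ENNReal.rpow_natCast (ENNReal.ofReal r) n, ← ENNReal.rpow_mul,
        show (n:ℝ) * ((2:ℝ)/n) = 2 by field_simp,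
        show ((2:ℝ)) = ((2:ℕ):ℝ) by norm_num, ENNReal.rpow_natCast,
        ENNReal.ofReal_pow hr]
    set W := ω ^ ((2:ℝ)/n) with hW
    have hW0 : W ≠ 0 := (ENNReal.rpow_pos hω0 hωt.ne).ne'
    have hWt : W ≠ ⊤ := ENNReal.rpow_ne_top_of_nonneg (by positivity) hωt.ne
    have hsum_sub : restrictedSum Θ ⊆ closedBall (0:EuclideanSpace ℝ (Fin n)) (Real.sqrt K) := by
      rintro z ⟨p, hp, rfl⟩
      have h2 : ‖p.1 + p.2‖^2 ≤ K := hp.2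
      rw [mem_closedBall_zero_iff]
      exact (Real.le_sqrt (norm_nonneg _) hK0.le).mpr h2
    have hsum_le : volume (restrictedSum Θ) ^ ((2:ℝ)/n) ≤ ENNReal.ofReal K * W := by
      calc volume (restrictedSum Θ) ^ ((2:ℝ)/n)
          ≤ (ENNReal.ofReal ((Real.sqrt K)^n) * ω) ^ ((2:ℝ)/n) := by
            rw [← hcb 0 _ (Real.sqrt_nonneg K)]
            exact ENNReal.rpow_le_rpow (measure_mono hsum_sub) (by positivity)
        _ = ENNReal.ofReal ((Real.sqrt K)^2) * W := hpow _ (Real.sqrt_nonneg K)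
        _ = ENNReal.ofReal K * W := by rw [Real.sq_sqrt hK0.le]
    have hrhs : volume A ^ ((2:ℝ)/n) + volume B ^ ((2:ℝ)/n)
        = (1 + ENNReal.ofReal (ρ^2)) * W := by
      rw [volA, volB, hpow ρ hρ0.le, add_mul, one_mul, hW]
    rw [hrhs]
    refine lt_of_le_of_lt hsum_le ?_
    apply ENNReal.mul_lt_mul_left hW0 hWt
    rw [← ENNReal.ofReal_one, ← ENNReal.ofReal_add (by norm_num) (by positivity)]
    exact ENNReal.ofReal_lt_ofReal_iff (by positivity) |>.mpr (by rw [hKdef]; linarith)
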